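/- The minimum distance of an LNEC code at sink t satisfies d_min^(t) = min{|ρ| : ρ ⊆ E, Φ(t) ∩ Δ(t,ρ) ≠ {0}}, where d_min^(t) is defined as the minimum of d^(t)(x·F_t, x'·F_t) over distinct x, x' ∈ F_q^ω. That is, the codeword-pair definition of minimum distance coincides with the subspace-intersection definition. -/

import Mathlib

open Finset Matrix

/-- The LNEC distance at a sink node: the minimum size of an edge subset `ρ` supporting an
error vector `z` with `y - y' = z · Gt`. -/
noncomputable def edist {F E ι : Type*} [Field F] [Fintype E] [Fintype ι]
    (Gt : Matrix E ι F) (y y' : ι → F) : ℕ :=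
  sInf {n | ∃ ρ : Finset E, ρ.card = n ∧
    ∃ z : E → F, (∀ e ∉ ρ, z e = 0) ∧ y - y' = z ᵥ* Gt}

/-- The codeword-pair definition of the minimum distance of an LNEC code at sink `t`
coincides with the subspace-intersection definition:
`d_min^(t) = min{|ρ| : Φ(t) ∩ Δ(t,ρ) ≠ {0}}`. -/
theorem stmt6 {F E ι : Type*} [Field F] [Fintype F] [Fintype E] [Fintype ι]
    [DecidableEq E] [DecidableEq ι] {ω : ℕ}
    (Ft : Matrix (Fin ω) ι F) (Gt : Matrix E ι F)
    (hrank : Ft.rank = ω)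
    (hsurj : ∀ y : ι → F, ∃ z : E → F, z ᵥ* Gt = y) :
    sInf {n | ∃ x x' : Fin ω → F, x ≠ x' ∧ edist Gt (x ᵥ* Ft) (x' ᵥ* Ft) = n} =
      sInf {n | ∃ ρ : Finset E, ρ.card = n ∧
        ∃ v : ι → F, v ≠ 0 ∧ (∃ x : Fin ω → F, v = x ᵥ* Ft) ∧
          ∃ z : E → F, (∀ e ∉ ρ, z e = 0) ∧ v = z ᵥ* Gt} := by
  classical
  -- rows of Ft are linearly independent, so x ↦ x ᵥ* Ft is injective
  have hli : LinearIndependent F (fun i ↦ Ft i) := by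
    rw [linearIndependent_iff_card_eq_finrank_span]
    rw [rank_eq_finrank_span_row] at hrank
    have h := hrank.symm
    simp only [Set.finrank, Fintype.card_fin] at h ⊢
    exact h
  have hinj : Function.Injective fun x : Fin ω → F => x ᵥ* Ft :=
    Matrix.vecMul_injective_iff.mpr hli
  have hker : ∀ x : Fin ω → F, x ᵥ* Ft = 0 → x = 0 := by
    intro x hx
    apply hinj
    simpa using hx
  set S := {n | ∃ x x' : Fin ω → F, x ≠ x' ∧ edist Gt (x ᵥ* Ft) (x' ᵥ* Ft) = n} with hS
  set T := {n | ∃ ρ : Finset E, ρ.card = n ∧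
        ∃ v : ι → F, v ≠ 0 ∧ (∃ x : Fin ω → F, v = x ᵥ* Ft) ∧
          ∃ z : E → F, (∀ e ∉ ρ, z e = 0) ∧ v = z ᵥ* Gt} with hT
  -- the defining set of any edist is nonempty
  have hne : ∀ y y' : ι → F, {n | ∃ ρ : Finset E, ρ.card = n ∧
      ∃ z : E → F, (∀ e ∉ ρ, z e = 0) ∧ y - y' = z ᵥ* Gt}.Nonempty := by
    intro y y'
    obtain ⟨z, hz⟩ := hsurj (y - y')
    exact ⟨(Finset.univ : Finset E).card, Finset.univ, rfl, z,
      fun e he => absurd (Finset.mem_univ e) he, hz.symm⟩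
  -- T nonempty implies S nonempty
  have hTS : T.Nonempty → S.Nonempty := by
    rintro ⟨n, ρ, hρ, v, hv0, ⟨x, hxv⟩, z, hzs, hvz⟩
    refine ⟨edist Gt (x ᵥ* Ft) (0 ᵥ* Ft), x, 0, ?_, rfl⟩
    intro h
    exact hv0 (by rw [hxv, h, Matrix.zero_vecMul])
  -- S nonempty implies T nonempty
  have hST : S.Nonempty → T.Nonempty := by
    rintro ⟨n, x, x', hxx, -⟩
    obtain ⟨z, hz⟩ := hsurj ((x - x') ᵥ* Ft)
    refine ⟨(Finset.univ : Finset E).card, Finset.univ, rfl, (x - x') ᵥ* Ft, ?_,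
      ⟨x - x', rfl⟩, z, fun e he => absurd (Finset.mem_univ e) he, hz.symm⟩
    intro h0
    exact hxx (sub_eq_zero.mp (hker _ h0))
  by_cases hSne : S.Nonempty
  · apply le_antisymm
    · -- sInf S ≤ sInf T
      obtain ⟨ρ, hρ, v, hv0, ⟨x, hxv⟩, z, hzs, hvz⟩ := Nat.sInf_mem (hST hSne)
      have hx0 : x ≠ 0 := by
        intro h
        exact hv0 (by rw [hxv, h, Matrix.zero_vecMul])
      have hmem : edist Gt (x ᵥ* Ft) (0 ᵥ* Ft) ∈ S := ⟨x, 0, hx0, rfl⟩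
      have h1 : sInf S ≤ edist Gt (x ᵥ* Ft) (0 ᵥ* Ft) := Nat.sInf_le hmem
      have h2 : edist Gt (x ᵥ* Ft) (0 ᵥ* Ft) ≤ sInf T := by
        rw [← hρ]
        exact Nat.sInf_le ⟨ρ, rfl, z, hzs, by
          rw [Matrix.zero_vecMul, sub_zero, ← hxv, hvz]⟩
      exact h1.trans h2
    · -- sInf T ≤ sInf S
      obtain ⟨x, x', hxx, hed⟩ := Nat.sInf_mem hSne
      obtain ⟨ρ, hρ, z, hzs, hdiff⟩ := Nat.sInf_mem (hne (x ᵥ* Ft) (x' ᵥ* Ft))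
      have hveq : (x - x') ᵥ* Ft = x ᵥ* Ft - x' ᵥ* Ft := Matrix.sub_vecMul Ft x x'
      have hv0 : (x - x') ᵥ* Ft ≠ 0 := by
        intro h0
        exact hxx (sub_eq_zero.mp (hker _ h0))
      have : ρ.card ∈ T := ⟨ρ, rfl, (x - x') ᵥ* Ft, hv0, ⟨x - x', rfl⟩, z, hzs, by
        rw [hveq, hdiff]⟩
      have := Nat.sInf_le this
      rw [hρ] at this
      rw [← hed]
      exact this
  · rw [Set.not_nonempty_iff_eq_empty] at hSne
    have hTe : T = ∅ := by
      by_contra h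
      have := hTS (Set.nonempty_iff_ne_empty.mpr h)
      rw [hSne] at this
      exact Set.not_nonempty_empty this
    rw [hSne, hTe]
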